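/- Let R be a weighted unilateral shift on ℓ²(ℕ) with weights (c_k)_{k≥1} satisfying c_k ∈ (0,1] for all k, and set T = (R + R*)/2, which is a self-adjoint operator with ‖T‖ ≤ 1. Suppose that e_0 lies in the range of √(1 − T²), the continuous functional calculus square root of the positive operator 1 − T². Let μ be a finite Borel measure on ℝ supported in [−1,1] satisfying ∫ t^n dμ(t) = Re⟨e_0, T^n e_0⟩ for all n ∈ ℕ. Then the function t ↦ log(1 − t)/(1 − t²) is μ-integrable on (−1,1); in particular ∫ log(1 − t)/(1 − t²) dμ(t) > −∞. -/

import Mathlib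

set_option synthInstance.maxHeartbeats 1000000
set_option maxHeartbeats 1000000
open MeasureTheory
open scoped InnerProductSpace ComplexOrder

noncomputable abbrev ell2 : Type := lp (fun _ : ℕ => ℂ) 2

noncomputable instance ell2CLM_selfAdjointCFC :
    ContinuousFunctionalCalculus ℝ (ell2 →L[ℂ] ell2) IsSelfAdjoint :=
  IsSelfAdjoint.instContinuousFunctionalCalculus

/-- The canonical orthonormal basis vectors of `ℓ²(ℕ)`. -/
noncomputable def e (k : ℕ) : ell2 := lp.single 2 k 1


lemma inner_e_left (k : ℕ) (x : ell2) : ⟪e k, x⟫_ℂ = x k := by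
  simp [e, lp.inner_single_left]

lemma e_apply (k m : ℕ) : (e k : ∀ _ : ℕ, ℂ) m = if m = k then 1 else 0 := by
  simp [e, lp.single_apply, Pi.single_apply]

lemma ext_coords {x y : ell2} (h : ∀ k, x k = y k) : x = y := by
  ext k; exact h k

lemma coord_eq_adj (R : ell2 →L[ℂ] ell2) (x : ell2) (m : ℕ) :
    (R x) m = ⟪ContinuousLinearMap.adjoint R (e m), x⟫_ℂ := by
  rw [ContinuousLinearMap.adjoint_inner_left, inner_e_left]

section
variable (c : ℕ → ℝ) (R : ell2 →L[ℂ] ell2)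
  (hR : ∀ k : ℕ, R (e k) = (c (k + 1) : ℂ) • e (k + 1))

include hR

lemma adj_e_zero : ContinuousLinearMap.adjoint R (e 0) = 0 := by
  apply ext_coords
  intro m
  have h : (ContinuousLinearMap.adjoint R (e 0)) m
      = ⟪R (e m), e 0⟫_ℂ := by
    rw [← inner_e_left, ContinuousLinearMap.adjoint_inner_right]
  rw [h, hR m]
  simp [inner_smul_left, e, lp.inner_single_right, e_apply, lp.single_apply]

lemma adj_e_succ (j : ℕ) :
    ContinuousLinearMap.adjoint R (e (j + 1)) = (c (j + 1) : ℂ) • e j := by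
  apply ext_coords
  intro m
  have h : (ContinuousLinearMap.adjoint R (e (j+1))) m
      = ⟪R (e m), e (j+1)⟫_ℂ := by
    rw [← inner_e_left, ContinuousLinearMap.adjoint_inner_right]
  rw [h, hR m]
  rcases eq_or_ne m j with rfl | hm
  · simp [inner_smul_left, e, lp.inner_single_right, lp.single_apply]
    erw [lp.coeFn_smul, Pi.smul_apply, lp.single_apply]
    simp
  · simp only [inner_smul_left, e, lp.inner_single_right, lp.single_apply, lp.coeFn_smul,
      Pi.smul_apply]
    have h1 : m + 1 ≠ j + 1 := by omega
    simp [hm, Ne.symm hm, h1]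
end

section
variable (c : ℕ → ℝ) (hc : ∀ k : ℕ, 0 < c (k + 1) ∧ c (k + 1) ≤ 1)
  (R : ell2 →L[ℂ] ell2)
  (hR : ∀ k : ℕ, R (e k) = (c (k + 1) : ℂ) • e (k + 1))
  (T : ell2 →L[ℂ] ell2)
  (hT : T = ((2 : ℂ)⁻¹) • (R + ContinuousLinearMap.adjoint R))

include hT in
lemma T_sa : IsSelfAdjoint T := by
  rw [IsSelfAdjoint, hT]
  simp only [star_smul, star_add, ContinuousLinearMap.star_eq_adjoint,
    ContinuousLinearMap.adjoint_adjoint]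
  rw [add_comm]
  congr 1
  simp [Complex.star_def, Complex.conj_eq_iff_im]

lemma hasSum_norm_sq (x : ell2) :
    HasSum (fun m => ‖x m‖ ^ 2) (‖x‖ ^ 2) := by
  have hs := (lp.hasSum_inner (𝕜 := ℂ) x x).mapL Complex.reCLM
  rw [norm_sq_eq_re_inner (𝕜 := ℂ)]
  convert hs using 2 with m
  case e'_6 => rfl
  simpa using norm_sq_eq_re_inner (𝕜 := ℂ) (x m)

lemma norm_sq_coords (x : ell2) : ‖x‖ ^ 2 = ∑' m, ‖x m‖ ^ 2 :=
  (hasSum_norm_sq x).tsum_eq.symm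

lemma summable_norm_sq (x : ell2) : Summable (fun m => ‖x m‖ ^ 2) :=
  (hasSum_norm_sq x).summable

include hc hR in
lemma R_norm_le : ‖R‖ ≤ 1 := by
  refine R.opNorm_le_bound zero_le_one (fun x => ?_)
  rw [one_mul]
  have key : ‖R x‖ ^ 2 ≤ ‖x‖ ^ 2 := by
    rw [norm_sq_coords, norm_sq_coords]
    have hc0 : ((R x) : ∀ _ : ℕ, ℂ) 0 = 0 := by
      rw [coord_eq_adj, adj_e_zero c R hR, inner_zero_left]
    have hck : ∀ k, ((R x) : ∀ _ : ℕ, ℂ) (k + 1) = (c (k+1) : ℂ) * x k := by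
      intro k
      rw [coord_eq_adj, adj_e_succ c R hR k, inner_smul_left, inner_e_left]
      simp
    rw [Summable.tsum_eq_zero_add (summable_norm_sq (R x))]
    rw [hc0]
    simp only [norm_zero, zero_pow, ne_eq, OfNat.ofNat_ne_zero, not_false_eq_true, zero_add]
    refine Summable.tsum_le_tsum (fun k => ?_) ((summable_norm_sq (R x)).comp_injective Nat.succ_injective) (summable_norm_sq x)
    rw [hck k]
    have h1 : ‖(c (k+1) : ℂ) * x k‖ = |c (k+1)| * ‖x k‖ := by
      rw [norm_mul, Complex.norm_real, Real.norm_eq_abs]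
    rw [h1, mul_pow]
    have h3 : |c (k+1)| ≤ 1 := abs_le.2 ⟨by linarith [(hc k).1], (hc k).2⟩
    have h4 : |c (k+1)| ^ 2 ≤ 1 := pow_le_one₀ (abs_nonneg _) h3
    calc |c (k+1)| ^ 2 * ‖x k‖ ^ 2 ≤ 1 * ‖x k‖ ^ 2 :=
          mul_le_mul_of_nonneg_right h4 (sq_nonneg _)
      _ = ‖x k‖ ^ 2 := one_mul _
  have h2 : (0:ℝ) ≤ ‖x‖ := norm_nonneg x
  nlinarith [norm_nonneg (R x)]

include hc hR hT in
lemma T_norm_le : ‖T‖ ≤ 1 := by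
  rw [hT]
  have h1 : ‖R + ContinuousLinearMap.adjoint R‖ ≤ ‖R‖ + ‖ContinuousLinearMap.adjoint R‖ :=
    norm_add_le _ _
  rw [LinearIsometryEquiv.norm_map ContinuousLinearMap.adjoint R] at h1
  have hR1 := R_norm_le c hc R hR
  have h2 : ‖((2:ℂ)⁻¹) • (R + ContinuousLinearMap.adjoint R)‖
      ≤ ‖(2:ℂ)⁻¹‖ * ‖R + ContinuousLinearMap.adjoint R‖ := ContinuousLinearMap.opNorm_smul_le _ _
  have h3 : ‖(2:ℂ)⁻¹‖ = 1/2 := by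
    rw [norm_inv]
    simp
  rw [h3] at h2
  have h4 : ‖R + ContinuousLinearMap.adjoint R‖ ≥ 0 := norm_nonneg _
  calc ‖((2:ℂ)⁻¹) • (R + ContinuousLinearMap.adjoint R)‖
      ≤ (1/2) * ‖R + ContinuousLinearMap.adjoint R‖ := h2
    _ ≤ (1/2) * (‖R‖ + ‖R‖) := by linarith
    _ ≤ 1 := by linarith

end
/-- Ballot-type numbers: `B n j` is the number of `±1` paths from `0` to `j` of length `n`
staying nonnegative, expressed via the reflection principle. -/
noncomputable def Bal (n j : ℕ) : ℝ :=
  if (n + j) % 2 = 0 then (n.choose ((n + j)/2) : ℝ) - (n.choose ((n + j)/2 + 1) : ℝ) else 0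

lemma Bal_zero (j : ℕ) : Bal 0 j = if j = 0 then 1 else 0 := by
  rcases Nat.eq_zero_or_pos j with rfl | hj
  · simp [Bal]
  · rw [Bal, if_neg (by omega : ¬ j = 0)]
    rcases Nat.even_or_odd j with hev | hodd
    · have h2 : (0 + j) % 2 = 0 := by rw [zero_add]; exact Nat.even_iff.1 hev
      have h4 : Nat.choose 0 ((0 + j)/2) = 0 := Nat.choose_eq_zero_of_lt (by
        rcases hev with ⟨m, rfl⟩; omega)
      rw [if_pos h2, h4]
      simp
    · have h2 : ¬ (0 + j) % 2 = 0 := by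
        rw [zero_add]
        have := Nat.odd_iff.1 hodd
        omega
      rw [if_neg h2]

lemma Bal_pascal (n j : ℕ) : Bal (n+1) (j+1) = Bal n j + Bal n (j+2) := by
  rcases Nat.even_or_odd (n + j) with hev | hodd
  · obtain ⟨a, ha⟩ := hev
    have h1 : (n + j) % 2 = 0 := Nat.even_iff.1 ⟨a, ha⟩
    have h2 : (n + (j+2)) % 2 = 0 := by omega
    have h3 : (n + 1 + (j+1)) % 2 = 0 := by omega
    have e1 : (n + j)/2 = a := by omega
    have e2 : (n + (j+2))/2 = a + 1 := by omega
    have e3 : (n + 1 + (j+1))/2 = a + 1 := by omega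
    simp only [Bal, h1, h2, h3, e1, e2, e3, if_true]
    have p1 : (n+1).choose (a+1) = n.choose a + n.choose (a+1) := Nat.choose_succ_succ _ _
    have p2 : (n+1).choose (a+2) = n.choose (a+1) + n.choose (a+2) := Nat.choose_succ_succ _ _
    push_cast [p1, p2]
    ring
  · have h1 : (n + j) % 2 = 1 := Nat.odd_iff.1 hodd
    have h2 : (n + (j+2)) % 2 = 1 := by omega
    have h3 : (n + 1 + (j+1)) % 2 = 1 := by omega
    simp [Bal, h1, h2, h3]

lemma Bal_zero_col (n : ℕ) : Bal (n+1) 0 = Bal n 1 := by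
  rcases Nat.even_or_odd n with hev | hodd
  · have h1 : (n + 1 + 0) % 2 = 1 := by
      have := Nat.even_iff.1 hev; omega
    have h2 : (n + 1) % 2 = 1 := by have := Nat.even_iff.1 hev; omega
    simp [Bal, h1, h2]
  · obtain ⟨a, ha⟩ := hodd
    have h1 : (n + 1 + 0) % 2 = 0 := by omega
    have h2 : (n + 1) % 2 = 0 := by omega
    have e1 : (n + 1 + 0)/2 = a + 1 := by omega
    have e2 : (n + 1)/2 = a + 1 := by omega
    simp only [Bal, h1, h2, e1, e2, if_true]
    subst ha
    have p1 : (2*a+1+1).choose (a+1) = (2*a+1).choose a + (2*a+1).choose (a+1) :=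
      Nat.choose_succ_succ _ _
    have p2 : (2*a+1+1).choose (a+2) = (2*a+1).choose (a+1) + (2*a+1).choose (a+2) :=
      Nat.choose_succ_succ _ _
    have psym : (2*a+1).choose a = (2*a+1).choose (a+1) := by
      have := Nat.choose_symm (n := 2*a+1) (k := a+1) (by omega)
      rw [(by omega : 2*a+1 - (a+1) = a)] at this
      exact this
    push_cast [p1, p2, psym]
    ring

lemma Bal_central (k : ℕ) :
    Bal (2*k) 0 = ((2*k).choose k : ℝ) - ((2*k).choose (k+1) : ℝ) := by
  have h1 : (2*k + 0) % 2 = 0 := by omega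
  have e1 : (2*k + 0)/2 = k := by omega
  simp [Bal, h1, e1]

/-- `centralBinom k ^ 2 * (2k+1) ≤ 16 ^ k`. -/
lemma centralBinom_sq_le (k : ℕ) : (Nat.centralBinom k) ^ 2 * (2 * k + 1) ≤ 16 ^ k := by
  induction k with
  | zero => simp [Nat.centralBinom]
  | succ k ih =>
    have key : (k + 1) * Nat.centralBinom (k + 1) = 2 * (2 * k + 1) * Nat.centralBinom k :=
      Nat.succ_mul_centralBinom_succ k
    have h1 : (k+1)^2 * ((Nat.centralBinom (k+1))^2 * (2*(k+1)+1))
        ≤ (k+1)^2 * 16^(k+1) := by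
      have expand : (k+1)^2 * ((Nat.centralBinom (k+1))^2 * (2*(k+1)+1))
          = ((k+1) * Nat.centralBinom (k+1))^2 * (2*k+3) := by ring
      rw [expand, key]
      have : (2 * (2*k+1) * Nat.centralBinom k)^2 * (2*k+3)
          = (4 * (2*k+1) * (2*k+3)) * ((Nat.centralBinom k)^2 * (2*k+1)) := by ring
      rw [this]
      calc (4 * (2*k+1) * (2*k+3)) * ((Nat.centralBinom k)^2 * (2*k+1))
          ≤ (16 * (k+1)^2) * 16^k := by
            apply Nat.mul_le_mul _ ih
            nlinarith
        _ = (k+1)^2 * 16^(k+1) := by ring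
    exact Nat.le_of_mul_le_mul_left h1 (by positivity)

/-- The real bound `Bal (2k) 0 / 4^k ≤ (k+1)^(-3/2)`. -/
lemma Bal_central_bound (k : ℕ) :
    Bal (2*k) 0 / 4 ^ k ≤ ((k:ℝ) + 1) ^ (-(3/2 : ℝ)) := by
  rw [Bal_central]
  have hkpos : (0:ℝ) < (k:ℝ) + 1 := by positivity
  -- (2k choose k) - (2k choose (k+1)) = centralBinom k / (k+1)
  have hid : ((2*k).choose (k+1) : ℝ) * ((k:ℝ)+1) = ((2*k).choose k : ℝ) * k := by
    have := Nat.choose_succ_right_eq (2*k) k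
    have h2 : 2*k - k = k := by omega
    rw [h2] at this
    exact_mod_cast congrArg (Nat.cast (R := ℝ)) this
  have hdiff : ((2*k).choose k : ℝ) - ((2*k).choose (k+1) : ℝ)
      = ((2*k).choose k : ℝ) / ((k:ℝ)+1) := by
    field_simp
    nlinarith [hid]
  rw [hdiff]
  -- centralBinom bound: choose(2k,k) ≤ 4^k / sqrt(2k+1) ≤ 4^k / sqrt(k+1)
  have hcb : ((2*k).choose k : ℝ) ^ 2 * (2*(k:ℝ)+1) ≤ 16 ^ k := by
    have := centralBinom_sq_le k
    have hcb' : Nat.centralBinom k = (2*k).choose k := Nat.centralBinom_eq_two_mul_choose k ▸ rfl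
    rw [hcb'] at this
    exact_mod_cast this
  have hch : ((2*k).choose k : ℝ) * Real.sqrt ((k:ℝ)+1) ≤ 4 ^ k := by
    have hsq : (((2*k).choose k : ℝ) * Real.sqrt ((k:ℝ)+1)) ^ 2 ≤ ((4:ℝ) ^ k) ^ 2 := by
      have e1 : (((2*k).choose k : ℝ) * Real.sqrt ((k:ℝ)+1)) ^ 2
          = ((2*k).choose k : ℝ)^2 * ((k:ℝ)+1) := by
        rw [mul_pow, Real.sq_sqrt (by positivity)]
      have h16 : ((4:ℝ)^k)^2 = 16^k := by
        rw [← pow_mul, show (16:ℝ) = 4^2 by norm_num, ← pow_mul, mul_comm]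
      rw [e1, h16]
      calc ((2*k).choose k : ℝ)^2 * ((k:ℝ)+1) ≤ ((2*k).choose k : ℝ)^2 * (2*(k:ℝ)+1) := by
            nlinarith [sq_nonneg ((2*k).choose k : ℝ)]
        _ ≤ 16^k := hcb
    have h1 : (0:ℝ) ≤ ((2*k).choose k : ℝ) * Real.sqrt ((k:ℝ)+1) := by positivity
    have h2 := Real.sqrt_le_sqrt hsq
    rwa [Real.sqrt_sq h1, Real.sqrt_sq (by positivity)] at h2
  have hrpow : ((k:ℝ) + 1) ^ (-(3/2 : ℝ)) = 1 / (((k:ℝ)+1) * Real.sqrt ((k:ℝ)+1)) := by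
    rw [Real.rpow_neg (le_of_lt hkpos), one_div]
    congr 1
    rw [show (3/2 : ℝ) = 1 + 1/2 by norm_num, Real.rpow_add hkpos, Real.rpow_one,
      ← Real.sqrt_eq_rpow]
  rw [hrpow, div_div, div_le_div_iff₀ (by positivity) (by positivity)]
  have hs0 : (0:ℝ) < Real.sqrt ((k:ℝ)+1) := Real.sqrt_pos.2 (by positivity)
  calc ((2*k).choose k : ℝ) * (((k:ℝ)+1) * Real.sqrt ((k:ℝ)+1))
      = (((2*k).choose k : ℝ) * Real.sqrt ((k:ℝ)+1)) * ((k:ℝ)+1) := by ring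
    _ ≤ 4^k * ((k:ℝ)+1) := mul_le_mul_of_nonneg_right hch (le_of_lt hkpos)
    _ = 1 * (((k:ℝ)+1) * 4^k) := by ring

/-- Coordinates of `T^n e₀`. -/
noncomputable def vv (c : ℕ → ℝ) : ℕ → ℕ → ℝ
  | 0, j => if j = 0 then 1 else 0
  | n+1, 0 => c 1 / 2 * vv c n 1
  | n+1, j+1 => c (j+1) / 2 * vv c n j + c (j+2) / 2 * vv c n (j+2)

section
variable (c : ℕ → ℝ) (hc : ∀ k : ℕ, 0 < c (k + 1) ∧ c (k + 1) ≤ 1)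
  (R : ell2 →L[ℂ] ell2)
  (hR : ∀ k : ℕ, R (e k) = (c (k + 1) : ℂ) • e (k + 1))
  (T : ell2 →L[ℂ] ell2)
  (hT : T = ((2 : ℂ)⁻¹) • (R + ContinuousLinearMap.adjoint R))

include hR hT in
lemma T_e_zero : T (e 0) = (((c 1 / 2 : ℝ)) : ℂ) • e 1 := by
  rw [hT]
  simp only [ContinuousLinearMap.smul_apply, ContinuousLinearMap.add_apply]
  rw [hR 0, adj_e_zero c R hR, add_zero, smul_smul]
  congr 1
  push_cast
  ring

include hR hT in
lemma T_e_succ (j : ℕ) : T (e (j+1))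
    = (((c (j+2) / 2 : ℝ)) : ℂ) • e (j+2) + (((c (j+1) / 2 : ℝ)) : ℂ) • e j := by
  rw [hT]
  simp only [ContinuousLinearMap.smul_apply, ContinuousLinearMap.add_apply]
  rw [hR (j+1), adj_e_succ c R hR j, smul_add, smul_smul, smul_smul]
  congr 2 <;> (push_cast; ring)

include hc hR hT in
lemma Tw_coord_zero (w : ell2) : (T w) 0 = (((c 1 / 2 : ℝ)) : ℂ) * w 1 := by
  have hsa : ContinuousLinearMap.adjoint T = T := by
    have := T_sa R T hT
    rwa [IsSelfAdjoint, ContinuousLinearMap.star_eq_adjoint] at this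
  rw [← inner_e_left, ← hsa, ContinuousLinearMap.adjoint_inner_right,
    T_e_zero c R hR T hT, inner_smul_left, inner_e_left]
  rw [Complex.conj_ofReal]

include hc hR hT in
lemma Tw_coord_succ (w : ell2) (j : ℕ) :
    (T w) (j+1) = (((c (j+1) / 2 : ℝ)) : ℂ) * w j + (((c (j+2) / 2 : ℝ)) : ℂ) * w (j+2) := by
  have hsa : ContinuousLinearMap.adjoint T = T := by
    have := T_sa R T hT
    rwa [IsSelfAdjoint, ContinuousLinearMap.star_eq_adjoint] at this
  rw [← inner_e_left, ← hsa, ContinuousLinearMap.adjoint_inner_right,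
    T_e_succ c R hR T hT j, inner_add_left, inner_smul_left, inner_smul_left,
    inner_e_left, inner_e_left, Complex.conj_ofReal, Complex.conj_ofReal]
  ring

include hc hR hT in
lemma T_pow_coord : ∀ n j, ((T^n) (e 0)) j = ((vv c n j : ℝ) : ℂ) := by
  intro n
  induction n with
  | zero =>
    intro j
    simp only [pow_zero, ContinuousLinearMap.one_apply, vv]
    rw [e_apply]
    split_ifs <;> simp
  | succ n ih =>
    intro j
    have hTn : ((T^(n+1)) (e 0)) = T ((T^n) (e 0)) := by
      rw [pow_succ']
      rfl
    rcases j with _ | j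
    · rw [hTn, Tw_coord_zero c hc R hR T hT, ih 1]
      show _ = ((vv c (n+1) 0 : ℝ) : ℂ)
      rw [show vv c (n+1) 0 = c 1 / 2 * vv c n 1 from rfl]
      push_cast
      ring
    · rw [hTn, Tw_coord_succ c hc R hR T hT _ j, ih j, ih (j+2)]
      show _ = ((vv c (n+1) (j+1) : ℝ) : ℂ)
      rw [show vv c (n+1) (j+1) = c (j+1) / 2 * vv c n j + c (j+2) / 2 * vv c n (j+2) from rfl]
      push_cast
      ring

include hc in
lemma vv_bounds : ∀ n j, 0 ≤ vv c n j ∧ vv c n j * 2^n ≤ Bal n j := by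
  intro n
  induction n with
  | zero =>
    intro j
    constructor
    · rw [show vv c 0 j = if j = 0 then 1 else 0 from rfl]
      split_ifs <;> norm_num
    · rw [Bal_zero, show vv c 0 j = if j = 0 then 1 else 0 from rfl]
      split_ifs <;> norm_num
  | succ n ih =>
    intro j
    rcases j with _ | j
    · obtain ⟨h0, h1⟩ := ih 1
      have hc1 : 0 < c 1 ∧ c 1 ≤ 1 := hc 0
      constructor
      · rw [show vv c (n+1) 0 = c 1 / 2 * vv c n 1 from rfl]
        have := hc1.1
        apply mul_nonneg (by linarith) h0
      · rw [show vv c (n+1) 0 = c 1 / 2 * vv c n 1 from rfl, Bal_zero_col]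
        calc c 1 / 2 * vv c n 1 * 2^(n+1) = c 1 * (vv c n 1 * 2^n) := by ring
          _ ≤ 1 * (vv c n 1 * 2^n) := by
              apply mul_le_mul_of_nonneg_right hc1.2
              apply mul_nonneg h0 (by positivity)
          _ = vv c n 1 * 2^n := one_mul _
          _ ≤ Bal n 1 := h1
    · obtain ⟨ha0, ha1⟩ := ih j
      obtain ⟨hb0, hb1⟩ := ih (j+2)
      have hcj1 : 0 < c (j+1) ∧ c (j+1) ≤ 1 := hc j
      have hcj2 : 0 < c (j+2) ∧ c (j+2) ≤ 1 := hc (j+1)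
      constructor
      · rw [show vv c (n+1) (j+1) = c (j+1) / 2 * vv c n j + c (j+2) / 2 * vv c n (j+2) from rfl]
        have h5 := hcj1.1
        have h6 := hcj2.1
        apply add_nonneg (mul_nonneg (by linarith) ha0) (mul_nonneg (by linarith) hb0)
      · rw [show vv c (n+1) (j+1) = c (j+1) / 2 * vv c n j + c (j+2) / 2 * vv c n (j+2) from rfl,
          Bal_pascal]
        have e1 : (c (j+1) / 2 * vv c n j + c (j+2) / 2 * vv c n (j+2)) * 2^(n+1)
            = c (j+1) * (vv c n j * 2^n) + c (j+2) * (vv c n (j+2) * 2^n) := by ring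
        rw [e1]
        have b1 : c (j+1) * (vv c n j * 2^n) ≤ Bal n j := by
          calc c (j+1) * (vv c n j * 2^n) ≤ 1 * (vv c n j * 2^n) := by
                apply mul_le_mul_of_nonneg_right hcj1.2 (mul_nonneg ha0 (by positivity))
            _ = vv c n j * 2^n := one_mul _
            _ ≤ Bal n j := ha1
        have b2 : c (j+2) * (vv c n (j+2) * 2^n) ≤ Bal n (j+2) := by
          calc c (j+2) * (vv c n (j+2) * 2^n) ≤ 1 * (vv c n (j+2) * 2^n) := by
                apply mul_le_mul_of_nonneg_right hcj2.2 (mul_nonneg hb0 (by positivity))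
            _ = vv c n (j+2) * 2^n := one_mul _
            _ ≤ Bal n (j+2) := hb1
        linarith

include hc hR hT in
lemma moment_nonneg (n : ℕ) : 0 ≤ (⟪e 0, (T ^ n) (e 0)⟫_ℂ).re := by
  rw [inner_e_left, T_pow_coord c hc R hR T hT n 0, Complex.ofReal_re]
  exact (vv_bounds c hc n 0).1

include hc hR hT in
lemma moment_bound (k : ℕ) :
    (⟪e 0, (T ^ (2*k)) (e 0)⟫_ℂ).re ≤ ((k:ℝ) + 1) ^ (-(3/2 : ℝ)) := by
  rw [inner_e_left, T_pow_coord c hc R hR T hT (2*k) 0, Complex.ofReal_re]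
  have h1 := (vv_bounds c hc (2*k) 0).2
  have h2 : (2:ℝ)^(2*k) = 4^k := by
    rw [pow_mul]; norm_num
  refine le_trans ?_ (Bal_central_bound k)
  rw [le_div_iff₀ (by positivity)]
  calc vv c (2*k) 0 * 4^k = vv c (2*k) 0 * 2^(2*k) := by rw [h2]
    _ ≤ Bal (2*k) 0 := h1

end

/-- coefficients of the dominating series -/
noncomputable def aa (n : ℕ) : ℝ := 2 * Real.log 2 + 2 * Real.log (n + 1)

lemma aa_nonneg (n : ℕ) : 0 ≤ aa n := by
  have h1 : (0:ℝ) ≤ Real.log 2 := Real.log_nonneg (by norm_num)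
  have h2 : (0:ℝ) ≤ Real.log (n+1) := Real.log_nonneg (by push_cast; linarith [Nat.cast_nonneg (α := ℝ) n])
  unfold aa; linarith

lemma aa_le (n : ℕ) : aa n ≤ 2 * Real.log 2 + 2 * n := by
  have h2 : Real.log ((n:ℝ)+1) ≤ (n:ℝ) := by
    have := Real.log_le_sub_one_of_pos (x := (n:ℝ)+1) (by positivity)
    linarith
  unfold aa; linarith

lemma summable_aa {s : ℝ} (h0 : 0 ≤ s) (h1 : s < 1) : Summable (fun n => aa n * s ^ n) := by
  have hs : ‖s‖ < 1 := by rw [Real.norm_eq_abs, abs_of_nonneg h0]; exact h1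
  have hgeo : Summable (fun n : ℕ => (2 * Real.log 2) * s ^ n) :=
    (summable_geometric_of_lt_one h0 h1).mul_left _
  have hpow : Summable (fun n : ℕ => 2 * ((n:ℝ) * s ^ n)) :=
    ((summable_pow_mul_geometric_of_norm_lt_one 1 hs).mul_left 2).congr (by
      intro n; simp [pow_one])
  refine Summable.of_nonneg_of_le
    (fun n => mul_nonneg (aa_nonneg n) (pow_nonneg h0 n)) (fun n => ?_) (hgeo.add hpow)
  have h2 := aa_le n
  have h3 : (0:ℝ) ≤ s ^ n := pow_nonneg h0 n
  nlinarith

lemma key_series {s : ℝ} (h0 : 0 ≤ s) (h1 : s < 1) :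
    2 * Real.log 2 - Real.log (1 - s) ≤ (1 - s) * ∑' n, aa n * s ^ n := by
  have hsum := summable_aa h0 h1
  have habs : |s| < 1 := by rw [abs_of_nonneg h0]; exact h1
  have hlog : HasSum (fun n : ℕ => s^(n+1)/(n+1)) (-Real.log (1-s)) :=
    Real.hasSum_pow_div_log_of_abs_lt_one habs
  set S := ∑' n, aa n * s ^ n with hS
  have hshift : Summable (fun n => aa (n+1) * s ^ (n+1)) := by
    have := hsum.comp_injective Nat.succ_injective
    exact this.congr (fun n => rfl)
  have hsmul : Summable (fun n => aa n * s ^ (n+1)) := by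
    refine (hsum.mul_left s).congr (fun n => ?_)
    ring
  have hdiffsum : Summable (fun n => (aa (n+1) - aa n) * s ^ (n+1)) := by
    refine (hshift.sub hsmul).congr (fun n => ?_)
    ring
  have hfactor : (1 - s) * S = aa 0 + ∑' n, (aa (n+1) - aa n) * s ^ (n+1) := by
    have e1 : S = aa 0 + ∑' n, aa (n+1) * s ^ (n+1) := by
      rw [hS, Summable.tsum_eq_zero_add hsum]
      simp
    have e2 : s * S = ∑' n, aa n * s ^ (n+1) := by
      rw [hS, ← tsum_mul_left]
      congr 1; funext n; ring
    have e3 : ∑' n, (aa (n+1) - aa n) * s ^ (n+1)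
        = (∑' n, aa (n+1) * s ^ (n+1)) - ∑' n, aa n * s ^ (n+1) := by
      rw [← Summable.tsum_sub hshift hsmul]
      congr 1; funext n; ring
    have : (1 - s) * S = S - s * S := by ring
    rw [this, e2, e1, e3]
    ring
  have hterm : ∀ n : ℕ, s^(n+1)/(n+1) ≤ (aa (n+1) - aa n) * s ^ (n+1) := by
    intro n
    have hn1 : (0:ℝ) < (n:ℝ) + 1 := by positivity
    have hn2 : (0:ℝ) < (n:ℝ) + 2 := by positivity
    have hlog2 : Real.log (((n:ℝ)+1)/((n:ℝ)+2)) ≤ ((n:ℝ)+1)/((n:ℝ)+2) - 1 :=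
      Real.log_le_sub_one_of_pos (by positivity)
    have hlogdiff : Real.log ((n:ℝ)+2) - Real.log ((n:ℝ)+1) ≥ 1/((n:ℝ)+2) := by
      have hld : Real.log (((n:ℝ)+1)/((n:ℝ)+2))
          = Real.log ((n:ℝ)+1) - Real.log ((n:ℝ)+2) := Real.log_div (by positivity) (by positivity)
      have heq : ((n:ℝ)+1)/((n:ℝ)+2) - 1 = -(1/((n:ℝ)+2)) := by
        field_simp
        try ring
      rw [hld, heq] at hlog2
      linarith
    have haa : aa (n+1) - aa n ≥ 1/((n:ℝ)+1) := by
      unfold aa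
      push_cast
      have hcast : ((n:ℝ) + 1 + 1) = (n:ℝ) + 2 := by ring
      rw [hcast]
      have h5 : 2/((n:ℝ)+2) ≥ 1/((n:ℝ)+1) := by
        rw [ge_iff_le, div_le_div_iff₀ hn1 hn2]
        linarith
      have heq2 : (2:ℝ)/((n:ℝ)+2) = 2*(1/((n:ℝ)+2)) := by ring
      rw [heq2] at h5
      linarith [hlogdiff]
    have hsp : (0:ℝ) ≤ s^(n+1) := pow_nonneg h0 _
    calc s^(n+1)/(n+1) = (1/((n:ℝ)+1)) * s^(n+1) := by ring
      _ ≤ (aa (n+1) - aa n) * s^(n+1) := mul_le_mul_of_nonneg_right haa hsp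
  have hle : -Real.log (1 - s) ≤ ∑' n, (aa (n+1) - aa n) * s ^ (n+1) := by
    rw [← hlog.tsum_eq]
    exact Summable.tsum_le_tsum hterm hlog.summable hdiffsum
  have haa0 : aa 0 = 2 * Real.log 2 := by
    unfold aa; norm_num
  rw [hfactor, haa0]
  linarith

lemma pointwise_bound {t : ℝ} (ht : t ∈ Set.Ioo (-1:ℝ) 1) :
    |Real.log (1 - t) / (1 - t^2)| ≤ ∑' n, aa n * |t| ^ n := by
  obtain ⟨ht1, ht2⟩ := ht
  set s := |t| with hs
  have h0 : 0 ≤ s := abs_nonneg t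
  have h1 : s < 1 := abs_lt.2 ⟨ht1, ht2⟩
  have hts : t ≤ s := le_abs_self t
  have hts' : -s ≤ t := neg_abs_le t
  have hden : 0 < 1 - s := by linarith
  have hden2 : 1 - s ≤ 1 - t^2 := by
    have : t^2 = s^2 := (sq_abs t).symm
    nlinarith
  have hdenpos : 0 < 1 - t^2 := lt_of_lt_of_le hden hden2
  have hnum : |Real.log (1 - t)| ≤ 2 * Real.log 2 - Real.log (1 - s) := by
    have hl1 : Real.log (1 - s) ≤ Real.log (1 - t) := by
      apply Real.log_le_log hden
      linarith
    have hl2 : Real.log (1 - t) ≤ Real.log 2 := by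
      apply Real.log_le_log (by linarith)
      linarith
    have hl3 : Real.log (1 - s) ≤ Real.log 2 := by
      apply Real.log_le_log hden
      linarith
    have hlog2 : 0 ≤ Real.log 2 := Real.log_nonneg (by norm_num)
    rw [abs_le]
    constructor <;> linarith
  have step1 : |Real.log (1 - t) / (1 - t^2)| = |Real.log (1 - t)| / (1 - t^2) := by
    rw [abs_div, abs_of_pos hdenpos]
  rw [step1]
  have step2 : |Real.log (1 - t)| / (1 - t^2) ≤ (2 * Real.log 2 - Real.log (1 - s)) / (1 - s) := by
    calc |Real.log (1 - t)| / (1 - t^2) ≤ |Real.log (1 - t)| / (1 - s) :=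
          div_le_div_of_nonneg_left (abs_nonneg _) hden hden2
      _ ≤ (2 * Real.log 2 - Real.log (1 - s)) / (1 - s) :=
          div_le_div_of_nonneg_right hnum hden.le
  refine step2.trans ?_
  rw [div_le_iff₀ hden]
  have := key_series h0 h1
  linarith [this, mul_comm (1-s) (∑' n, aa n * s ^ n)]

noncomputable def bb (k : ℕ) : ℝ := ((k:ℝ) + 1) ^ (-(3/2 : ℝ))

lemma bb_nonneg (k : ℕ) : 0 ≤ bb k := Real.rpow_nonneg (by positivity) _

lemma summable_coeff : Summable (fun n : ℕ => aa n * bb (n / 2)) := by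
  have hD : (0:ℝ) < 2 ^ ((3/2:ℝ)) := Real.rpow_pos_of_pos (by norm_num) _
  set D := (2:ℝ) ^ ((3/2:ℝ)) with hDdef
  -- bound each term by (10 * D) * (n+1)^(-5/4)
  have hterm : ∀ n : ℕ, aa n * bb (n / 2) ≤ (10 * D) * ((n:ℝ)+1) ^ (-(5/4:ℝ)) := by
    intro n
    have hn1 : (0:ℝ) < (n:ℝ) + 1 := by positivity
    -- aa n ≤ 10 * (n+1)^(1/4)
    have hrpos : (0:ℝ) < ((n:ℝ)+1) ^ ((1/4:ℝ)) := Real.rpow_pos_of_pos hn1 _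
    have hr1 : (1:ℝ) ≤ ((n:ℝ)+1) ^ ((1/4:ℝ)) := by
      apply Real.one_le_rpow (by linarith [Nat.cast_nonneg (α := ℝ) n]) (by norm_num)
    have hlogle : Real.log ((n:ℝ)+1) ≤ 4 * ((n:ℝ)+1) ^ ((1/4:ℝ)) := by
      have h1 : Real.log (((n:ℝ)+1) ^ ((1/4:ℝ))) = (1/4:ℝ) * Real.log ((n:ℝ)+1) :=
        Real.log_rpow hn1 _
      have h2 : Real.log (((n:ℝ)+1) ^ ((1/4:ℝ))) ≤ ((n:ℝ)+1) ^ ((1/4:ℝ)) - 1 :=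
        Real.log_le_sub_one_of_pos hrpos
      linarith
    have hlog2 : Real.log 2 ≤ 1 := by
      have := Real.log_le_sub_one_of_pos (x := 2) (by norm_num)
      linarith
    have haan : aa n ≤ 10 * ((n:ℝ)+1) ^ ((1/4:ℝ)) := by
      unfold aa
      push_cast
      linarith
    -- bb (n/2) ≤ D * (n+1)^(-3/2)
    have hhalf : ((n:ℝ)+1)/2 ≤ ((n / 2 : ℕ) : ℝ) + 1 := by
      have : (n:ℝ) / 2 ≤ ((n / 2 : ℕ) : ℝ) + 1/2 := by
        have h2 : n ≤ 2*(n/2)+1 := by omega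
        have h3 : (n:ℝ) ≤ 2*((n / 2 : ℕ):ℝ)+1 := by exact_mod_cast h2
        linarith
      linarith
    have hbb : bb (n / 2) ≤ D * ((n:ℝ)+1) ^ (-(3/2:ℝ)) := by
      unfold bb
      have hmono : (((n:ℝ)+1)/2) ^ (-(3/2:ℝ)) ≥ (((n / 2 : ℕ) : ℝ) + 1) ^ (-(3/2:ℝ)) := by
        apply Real.rpow_le_rpow_of_nonpos (by positivity) hhalf (by norm_num)
      have hsplit : (((n:ℝ)+1)/2) ^ (-(3/2:ℝ)) = D * ((n:ℝ)+1) ^ (-(3/2:ℝ)) := by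
        rw [Real.div_rpow (by positivity) (by norm_num)]
        rw [div_eq_mul_inv, ← Real.rpow_neg (by norm_num : (0:ℝ) ≤ 2), neg_neg]
        ring
      rw [hsplit] at hmono
      exact hmono
    have hbbn : (0:ℝ) ≤ bb (n/2) := bb_nonneg _
    have haapos : 0 ≤ aa n := aa_nonneg n
    calc aa n * bb (n/2) ≤ (10 * ((n:ℝ)+1) ^ ((1/4:ℝ))) * (D * ((n:ℝ)+1) ^ (-(3/2:ℝ))) := by
          apply mul_le_mul haan hbb hbbn (by positivity)
      _ = (10 * D) * (((n:ℝ)+1) ^ ((1/4:ℝ)) * ((n:ℝ)+1) ^ (-(3/2:ℝ))) := by ring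
      _ = (10 * D) * ((n:ℝ)+1) ^ (-(5/4:ℝ)) := by
          rw [← Real.rpow_add hn1]
          norm_num
  have hmaj : Summable (fun n : ℕ => (10 * D) * ((n:ℝ)+1) ^ (-(5/4:ℝ))) := by
    apply Summable.mul_left
    have hbase : Summable (fun n : ℕ => ((n:ℝ)) ^ (-(5/4:ℝ))) := by
      rw [Real.summable_nat_rpow]
      norm_num
    have := (summable_nat_add_iff (f := fun n : ℕ => ((n:ℝ)) ^ (-(5/4:ℝ))) 1).2 hbase
    refine this.congr (fun n => ?_)
    push_cast
    ring_nf
  refine Summable.of_nonneg_of_le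
    (fun n => mul_nonneg (aa_nonneg n) (bb_nonneg _)) hterm hmaj

lemma integrable_main (μ : Measure ℝ) [IsFiniteMeasure μ]
    (hsupp : μ (Set.Icc (-1 : ℝ) 1)ᶜ = 0)
    (hm : ∀ k : ℕ, ∫ t, t ^ (2*k) ∂μ ≤ bb k) :
    IntegrableOn (fun t : ℝ => Real.log (1 - t) / (1 - t ^ 2)) (Set.Ioo (-1 : ℝ) 1) μ := by
  have hae : ∀ᵐ t ∂μ, t ∈ Set.Icc (-1:ℝ) 1 := by
    rw [MeasureTheory.ae_iff]
    have hset : {t : ℝ | ¬ t ∈ Set.Icc (-1:ℝ) 1} = (Set.Icc (-1:ℝ) 1)ᶜ := rfl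
    rw [hset]
    exact hsupp
  -- integrability of even powers
  have hpow_int : ∀ k : ℕ, Integrable (fun t : ℝ => t ^ (2*k)) μ := by
    intro k
    refine Integrable.mono' (integrable_const (1:ℝ)) ((continuous_pow (2*k)).aestronglyMeasurable) ?_
    filter_upwards [hae] with t ht
    rw [Real.norm_eq_abs, abs_pow]
    apply pow_le_one₀ (abs_nonneg t)
    rw [abs_le]
    exact ⟨ht.1, ht.2⟩
  -- lintegral moment bound
  have hlmom : ∀ k : ℕ, ∫⁻ t, ENNReal.ofReal (t ^ (2*k)) ∂μ ≤ ENNReal.ofReal (bb k) := by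
    intro k
    rw [← ofReal_integral_eq_lintegral_ofReal (hpow_int k)
      (Filter.Eventually.of_forall (fun t => (even_two_mul k).pow_nonneg t))]
    exact ENNReal.ofReal_le_ofReal (hm k)
  -- per-term bound on Ioo
  have hterm : ∀ n : ℕ, (∫⁻ t in Set.Ioo (-1:ℝ) 1, ENNReal.ofReal (aa n * |t| ^ n) ∂μ)
      ≤ ENNReal.ofReal (aa n * bb (n / 2)) := by
    intro n
    have heq : ∀ t : ℝ, ENNReal.ofReal (aa n * |t| ^ n)
        = ENNReal.ofReal (aa n) * ENNReal.ofReal (|t| ^ n) := fun t =>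
      ENNReal.ofReal_mul (aa_nonneg n)
    calc ∫⁻ t in Set.Ioo (-1:ℝ) 1, ENNReal.ofReal (aa n * |t| ^ n) ∂μ
        = ENNReal.ofReal (aa n) * ∫⁻ t in Set.Ioo (-1:ℝ) 1, ENNReal.ofReal (|t| ^ n) ∂μ := by
          simp_rw [heq]
          rw [lintegral_const_mul' _ _ ENNReal.ofReal_ne_top]
      _ ≤ ENNReal.ofReal (aa n) * ENNReal.ofReal (bb (n / 2)) := by
          apply mul_le_mul_right ?_ _
          calc ∫⁻ t in Set.Ioo (-1:ℝ) 1, ENNReal.ofReal (|t| ^ n) ∂μ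
              ≤ ∫⁻ t in Set.Ioo (-1:ℝ) 1, ENNReal.ofReal (t ^ (2*(n/2))) ∂μ := by
                apply setLIntegral_mono ((ENNReal.continuous_ofReal.comp
                  (continuous_pow (2*(n/2)))).measurable)
                intro t ht
                apply ENNReal.ofReal_le_ofReal
                have habs : |t| ≤ 1 := by
                  rw [abs_le]; exact ⟨ht.1.le, ht.2.le⟩
                have h2 : |t| ^ n ≤ |t| ^ (2*(n/2)) :=
                  pow_le_pow_of_le_one (abs_nonneg t) habs (by omega)
                calc |t| ^ n ≤ |t| ^ (2*(n/2)) := h2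
                  _ = t ^ (2*(n/2)) := by
                      rw [← abs_pow, abs_of_nonneg ((even_two_mul (n/2)).pow_nonneg t)]
            _ ≤ ∫⁻ t, ENNReal.ofReal (t ^ (2*(n/2))) ∂μ :=
                lintegral_mono' Measure.restrict_le_self (le_refl _)
            _ ≤ ENNReal.ofReal (bb (n/2)) := hlmom (n/2)
      _ = ENNReal.ofReal (aa n * bb (n / 2)) := (ENNReal.ofReal_mul (aa_nonneg n)).symm
  -- assemble
  constructor
  · apply ContinuousOn.aestronglyMeasurable ?_ measurableSet_Ioo
    apply ContinuousOn.div
    · apply ContinuousOn.log (by fun_prop)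
      intro t ht
      have : (0:ℝ) < 1 - t := by linarith [ht.2]
      linarith
    · fun_prop
    · intro t ht
      obtain ⟨h1, h2⟩ := ht
      have : t^2 < 1 := by nlinarith
      nlinarith
  · rw [hasFiniteIntegral_iff_norm]
    calc ∫⁻ t in Set.Ioo (-1:ℝ) 1, ENNReal.ofReal ‖Real.log (1 - t) / (1 - t ^ 2)‖ ∂μ
        ≤ ∫⁻ t in Set.Ioo (-1:ℝ) 1, ∑' n, ENNReal.ofReal (aa n * |t| ^ n) ∂μ := by
          apply setLIntegral_mono
          · apply Measurable.ennreal_tsum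
            intro n
            exact (ENNReal.continuous_ofReal.comp (by fun_prop)).measurable
          intro t ht
          have hb := pointwise_bound ht
          have hsum : Summable (fun n => aa n * |t| ^ n) :=
            summable_aa (abs_nonneg t) (abs_lt.2 ⟨ht.1, ht.2⟩)
          calc ENNReal.ofReal ‖Real.log (1 - t) / (1 - t ^ 2)‖
              ≤ ENNReal.ofReal (∑' n, aa n * |t| ^ n) := by
                apply ENNReal.ofReal_le_ofReal
                rw [Real.norm_eq_abs]
                exact hb
            _ = ∑' n, ENNReal.ofReal (aa n * |t| ^ n) :=
                ENNReal.ofReal_tsum_of_nonneg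
                  (fun n => mul_nonneg (aa_nonneg n) (pow_nonneg (abs_nonneg t) n)) hsum
      _ = ∑' n, ∫⁻ t in Set.Ioo (-1:ℝ) 1, ENNReal.ofReal (aa n * |t| ^ n) ∂μ := by
          apply lintegral_tsum
          intro n
          exact ((ENNReal.continuous_ofReal.comp (by fun_prop)).measurable).aemeasurable
      _ ≤ ∑' n, ENNReal.ofReal (aa n * bb (n / 2)) := ENNReal.tsum_le_tsum hterm
      _ = ENNReal.ofReal (∑' n, aa n * bb (n / 2)) :=
          (ENNReal.ofReal_tsum_of_nonneg
            (fun n => mul_nonneg (aa_nonneg n) (bb_nonneg _)) summable_coeff).symm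
      _ < ⊤ := ENNReal.ofReal_lt_top

/-- Let `R` be a weighted unilateral shift with weights in `(0,1]` and `T = (R + R*)/2`.
If `e₀` lies in the range of `√(1 - T²)` and `μ` is the spectral measure of `T` in the vector
state given by `e₀` (a finite measure on `[-1,1]` determined by the moment conditions), then
`t ↦ log(1−t)/(1−t²)` is `μ`-integrable on `(-1, 1)`.  Moreover `T` is a self-adjoint
contraction. -/
theorem shift_spectral_measure_integrable (c : ℕ → ℝ)
    (hc : ∀ k : ℕ, 0 < c (k + 1) ∧ c (k + 1) ≤ 1)
    (R : ell2 →L[ℂ] ell2)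
    (hR : ∀ k : ℕ, R (e k) = (c (k + 1) : ℂ) • e (k + 1))
    (T : ell2 →L[ℂ] ell2)
    (hT : T = ((2 : ℂ)⁻¹) • (R + ContinuousLinearMap.adjoint R))
    (he : ∃ ζ : ell2, (CFC.sqrt (1 - T ^ 2) : ell2 →L[ℂ] ell2) ζ = e 0)
    (μ : Measure ℝ) [IsFiniteMeasure μ]
    (hsupp : μ (Set.Icc (-1 : ℝ) 1)ᶜ = 0)
    (hmom : ∀ n : ℕ, ∫ t, t ^ n ∂μ = (⟪e 0, (T ^ n) (e 0)⟫_ℂ).re) :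
    IsSelfAdjoint T ∧ ‖T‖ ≤ 1 ∧
    IntegrableOn (fun t : ℝ => Real.log (1 - t) / (1 - t ^ 2)) (Set.Ioo (-1 : ℝ) 1) μ := by
  refine ⟨T_sa R T hT, T_norm_le c hc R hR T hT, ?_⟩
  apply integrable_main μ hsupp
  intro k
  rw [hmom (2*k)]
  exact moment_bound c hc R hR T hT k
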